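/- Let k ≥ 1, let μ₁,…,μ_k be probability distributions on finite sets Ω₁,…,Ω_k, and let B_i ⊆ Ω_i satisfy μ_i(B_i) ≤ 1/k for each i ∈ {1,…,k}. Then there exists a probability distribution ν on the product Ω₁ × ⋯ × Ω_k whose i-th coordinate marginal equals μ_i for every i, and such that ν({ω : there exist i ≠ j with ω_i ∈ B_i and ω_j ∈ B_j}) = 0; i.e., under ν, with probability one at most one coordinate lies in its designated set. -/
import Mathlib

open Finset


open Finset

lemma exists_layout {Ω : Type*} [Fintype Ω] [DecidableEq Ω]
    (μ : Ω → ℝ) (h0 : ∀ a, 0 ≤ μ a) (h1 : ∑ a, μ a = 1) (B : Finset Ω) :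
    ∃ S : Ω → ℝ, (∀ a, 0 ≤ S a) ∧ (∀ a, S a + μ a ≤ 1) ∧
      (∀ a ∈ B, S a + μ a ≤ ∑ b ∈ B, μ b) ∧
      (∀ u, 0 ≤ u → u < 1 → ∃! a, S a ≤ u ∧ u < S a + μ a) := by
  classical
  set n := Fintype.card Ω with hn
  let e := Fintype.equivFin Ω
  set key : Ω → ℕ := fun a => (if a ∈ B then 0 else n) + (e a : ℕ) with hkey
  have hkeylt : ∀ a, (e a : ℕ) < n := fun a => (e a).isLt
  have hkeyinj : Function.Injective key := by
    intro a b hab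
    simp only [hkey] at hab
    by_cases ha : a ∈ B <;> by_cases hb : b ∈ B <;> simp [ha, hb] at hab
    · exact e.injective (Fin.ext hab)
    · have := hkeylt a; omega
    · have := hkeylt b; omega
    · exact e.injective (Fin.ext hab)
  set S : Ω → ℝ := fun a => ∑ c ∈ univ.filter (fun c => key c < key a), μ c with hS
  have hsub : ∀ a b : Ω, key a < key b →
      insert a (univ.filter (fun c => key c < key a)) ⊆ univ.filter (fun c => key c < key b) := by
    intro a b hab
    intro c hc
    rcases Finset.mem_insert.1 hc with rfl | hc
    · simp [hab]
    · simp only [mem_filter, mem_univ, true_and] at hc ⊢; omega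
  have hTS : ∀ a : Ω, S a + μ a = ∑ c ∈ insert a (univ.filter (fun c => key c < key a)), μ c := by
    intro a
    rw [Finset.sum_insert (by simp), add_comm]
  have hmono : ∀ a b : Ω, key a < key b → S a + μ a ≤ S b := by
    intro a b hab
    rw [hTS a]
    exact Finset.sum_le_sum_of_subset_of_nonneg (hsub a b hab) (fun c _ _ => h0 c)
  refine ⟨S, ?_, ?_, ?_, ?_⟩
  · intro a; exact Finset.sum_nonneg fun c _ => h0 c
  · intro a
    rw [hTS a, ← h1]
    exact Finset.sum_le_sum_of_subset_of_nonneg (Finset.subset_univ _) (fun c _ _ => h0 c)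
  · intro a ha
    rw [hTS a]
    refine Finset.sum_le_sum_of_subset_of_nonneg ?_ (fun c _ _ => h0 c)
    intro c hc
    rcases Finset.mem_insert.1 hc with rfl | hc
    · exact ha
    · simp only [mem_filter, mem_univ, true_and] at hc
      by_contra hcB
      have : key c = n + e c := by simp [hkey, hcB]
      have : key a = (e a : ℕ) := by simp [hkey, ha]
      have := hkeylt a
      omega
  · intro u hu0 hu1
    have hne : (univ : Finset Ω).Nonempty := by
      by_contra h
      rw [not_nonempty_iff_eq_empty] at h
      rw [h, Finset.sum_empty] at h1
      norm_num at h1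
    -- existence
    have hG : ∃ a : Ω, u < S a + μ a := by
      obtain ⟨b, -, hb⟩ := Finset.exists_max_image univ key hne
      refine ⟨b, ?_⟩
      have : insert b (univ.filter (fun c => key c < key b)) = univ := by
        apply Finset.eq_univ_of_forall
        intro c
        rcases eq_or_ne c b with rfl | hcb
        · exact Finset.mem_insert_self _ _
        · refine Finset.mem_insert_of_mem ?_
          simp only [mem_filter, mem_univ, true_and]
          have h1 := hb c (mem_univ c)
          have h2 : key c ≠ key b := fun h => hcb (hkeyinj h)
          omega
      rw [hTS b, this, h1]
      exact hu1
    set G : Finset Ω := univ.filter (fun a => u < S a + μ a) with hGdef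
    have hGne : G.Nonempty := by
      obtain ⟨a, ha⟩ := hG
      exact ⟨a, by simp [hGdef, ha]⟩
    obtain ⟨a, haG, hamin⟩ := Finset.exists_min_image G key hGne
    simp only [hGdef, mem_filter, mem_univ, true_and] at haG
    have haS : S a ≤ u := by
      by_contra hSa
      push_neg at hSa
      have hFne : (univ.filter (fun c => key c < key a)).Nonempty := by
        by_contra hF
        rw [not_nonempty_iff_eq_empty] at hF
        have : S a = 0 := by rw [hS]; simp only; rw [hF, Finset.sum_empty]
        rw [this] at hSa
        exact absurd hu0 (not_le.2 hSa)
      obtain ⟨c, hcF, hcmax⟩ := Finset.exists_max_image _ key hFne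
      simp only [mem_filter, mem_univ, true_and] at hcF
      have hceq : insert c (univ.filter (fun d => key d < key c)) =
          univ.filter (fun d => key d < key a) := by
        apply Finset.Subset.antisymm
        · exact hsub c a hcF
        · intro d hd
          simp only [mem_filter, mem_univ, true_and] at hd
          rcases eq_or_ne d c with rfl | hdc
          · exact Finset.mem_insert_self _ _
          · refine Finset.mem_insert_of_mem ?_
            simp only [mem_filter, mem_univ, true_and]
            have := hcmax d (by simp only [mem_filter, mem_univ, true_and]; exact hd)
            have : key d ≠ key c := fun h => hdc (hkeyinj h)
            omega
      have hTc : S c + μ c = S a := by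
        rw [hTS c, hceq]
      have hcG : c ∈ G := by
        simp only [hGdef, mem_filter, mem_univ, true_and]
        rw [hTc]; exact hSa
      have := hamin c hcG
      omega
    refine ⟨a, ⟨haS, haG⟩, ?_⟩
    intro b ⟨hbS, hbT⟩
    by_contra hba
    have hkne : key b ≠ key a := fun h => hba (hkeyinj h)
    rcases lt_or_gt_of_ne hkne with h | h
    · have := hmono b a h
      linarith
    · have := hmono a b h
      linarith

lemma vol_fract_interval (c S T : ℝ) (hc0 : 0 ≤ c) (hc1 : c < 1)
    (hS : 0 ≤ S) (hST : S ≤ T) (hT : T ≤ 1) :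
    MeasureTheory.volume (Set.Ico 0 1 ∩ (fun t => Int.fract (t + c)) ⁻¹' Set.Ico S T)
      = ENNReal.ofReal (T - S) := by
  have hfr2 : ∀ t : ℝ, 0 ≤ t + c - 1 → t + c - 1 < 1 → Int.fract (t + c) = t + c - 1 := by
    intro t h1 h2
    have h3 : Int.fract (t + c - 1) = t + c - 1 := Int.fract_eq_self.2 ⟨h1, h2⟩
    conv_lhs => rw [show t + c = (t + c - 1) + 1 by ring, Int.fract_add_one]
    exact h3
  have hset : Set.Ico (0:ℝ) 1 ∩ (fun t => Int.fract (t + c)) ⁻¹' Set.Ico S T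
      = Set.Ico (max 0 (S - c)) (T - c) ∪ Set.Ico (S + 1 - c) (min 1 (T + 1 - c)) := by
    ext t
    simp only [Set.mem_inter_iff, Set.mem_Ico, Set.mem_preimage, Set.mem_union]
    constructor
    · rintro ⟨⟨ht0, ht1⟩, hf1, hf2⟩
      rcases lt_or_ge (t + c) 1 with h | h
      · have hfr : Int.fract (t + c) = t + c := Int.fract_eq_self.2 ⟨by linarith, h⟩
        rw [hfr] at hf1 hf2
        exact Or.inl ⟨max_le ht0 (by linarith), by linarith⟩
      · have hfr : Int.fract (t + c) = t + c - 1 := hfr2 t (by linarith) (by linarith)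
        rw [hfr] at hf1 hf2
        exact Or.inr ⟨by linarith, lt_min ht1 (by linarith)⟩
    · rintro (⟨ht1, ht2⟩ | ⟨ht1, ht2⟩)
      · have h0t : 0 ≤ t := le_of_max_le_left ht1
        have hSt : S - c ≤ t := le_of_max_le_right ht1
        have hfr : Int.fract (t + c) = t + c := Int.fract_eq_self.2 ⟨by linarith, by linarith⟩
        exact ⟨⟨h0t, by linarith⟩, by rw [hfr]; exact ⟨by linarith, by linarith⟩⟩
      · have ht2a : t < 1 := lt_of_lt_of_le ht2 (min_le_left _ _)
        have ht2b : t < T + 1 - c := lt_of_lt_of_le ht2 (min_le_right _ _)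
        have hfr : Int.fract (t + c) = t + c - 1 := hfr2 t (by linarith) (by linarith)
        exact ⟨⟨by linarith, ht2a⟩, by rw [hfr]; exact ⟨by linarith, by linarith⟩⟩
  rw [hset]
  have hdisj : Disjoint (Set.Ico (max 0 (S - c)) (T - c)) (Set.Ico (S + 1 - c) (min 1 (T + 1 - c))) := by
    apply Set.Ico_disjoint_Ico.2
    exact le_trans (min_le_left _ _) (le_max_of_le_right (by linarith))
  rw [MeasureTheory.measure_union hdisj measurableSet_Ico, Real.volume_Ico, Real.volume_Ico]
  rcases le_or_gt c S with hcS | hSc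
  · rw [max_eq_right (by linarith : (0:ℝ) ≤ S - c)]
    have h2 : min 1 (T + 1 - c) - (S + 1 - c) ≤ 0 := by
      rcases le_or_gt (T + 1 - c) 1 with h | h
      · rw [min_eq_right h]; linarith
      · rw [min_eq_left h.le]; linarith
    rw [ENNReal.ofReal_eq_zero.2 h2, add_zero]
    congr 1; ring
  · rcases le_or_gt T c with hTc | hcT
    · rw [max_eq_left (by linarith : S - c ≤ (0:ℝ))]
      rw [ENNReal.ofReal_eq_zero.2 (by linarith : T - c - 0 ≤ 0), zero_add]
      rw [min_eq_right (by linarith : T + 1 - c ≤ 1)]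
      congr 1; ring
    · rw [max_eq_left (by linarith : S - c ≤ (0:ℝ)), min_eq_left (by linarith : (1:ℝ) ≤ T + 1 - c)]
      rw [← ENNReal.ofReal_add (by linarith) (by linarith)]
      congr 1; ring

theorem exists_coupling_at_most_one_bad (k : ℕ) (hk : 1 ≤ k)
    (Ω : Fin k → Type*) [∀ i, Fintype (Ω i)] [∀ i, DecidableEq (Ω i)]
    (μ : (i : Fin k) → Ω i → ℝ)
    (hμ0 : ∀ i a, 0 ≤ μ i a) (hμ1 : ∀ i, ∑ a, μ i a = 1)
    (B : (i : Fin k) → Finset (Ω i))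
    (hB : ∀ i, ∑ a ∈ B i, μ i a ≤ 1 / (k : ℝ)) :
    ∃ ν : ((i : Fin k) → Ω i) → ℝ,
      (∀ ω, 0 ≤ ν ω) ∧
      (∑ ω, ν ω = 1) ∧
      (∀ i a, ∑ ω ∈ univ.filter (fun ω : (i : Fin k) → Ω i => ω i = a), ν ω = μ i a) ∧
      (∑ ω ∈ univ.filter
          (fun ω : (i : Fin k) → Ω i => ∃ i j, i ≠ j ∧ ω i ∈ B i ∧ ω j ∈ B j), ν ω = 0) := by
  classical
  have hkpos : (0:ℝ) < k := by positivity
  choose S hS0 hS1 hSB hEU using fun i => exists_layout (μ i) (hμ0 i) (hμ1 i) (B i)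
  have hne : ∀ i, Nonempty (Ω i) := by
    intro i
    by_contra h
    rw [not_nonempty_iff] at h
    have h1 := hμ1 i
    haveI := h
    rw [Finset.univ_eq_empty, Finset.sum_empty] at h1
    norm_num at h1
  set f : (i : Fin k) → ℝ → Ω i := fun i u =>
    if h : ∃ a, S i a ≤ u ∧ u < S i a + μ i a then h.choose else (hne i).some with hfdef
  have hf : ∀ (i : Fin k) (u : ℝ), 0 ≤ u → u < 1 →
      ∀ a, f i u = a ↔ (S i a ≤ u ∧ u < S i a + μ i a) := by
    intro i u hu0 hu1 a
    obtain ⟨b, hb, hbu⟩ := hEU i u hu0 hu1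
    have hex : ∃ a, S i a ≤ u ∧ u < S i a + μ i a := ⟨b, hb⟩
    have hfu : f i u = b := by
      rw [hfdef]
      simp only [hex, dif_pos]
      exact hbu _ hex.choose_spec
    constructor
    · rintro rfl
      rw [hfu]
      exact hb
    · intro ha
      rw [hfu]
      exact (hbu a ha).symm
  set c : Fin k → ℝ := fun i => (i : ℕ) / k with hcdef
  have hc0 : ∀ i, 0 ≤ c i := fun i => by positivity
  have hc1 : ∀ i, c i < 1 := by
    intro i
    rw [hcdef, div_lt_one hkpos]
    exact_mod_cast i.isLt
  set g : Fin k → ℝ → ℝ := fun i t => Int.fract (t + c i) with hgdef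
  have hg0 : ∀ i t, 0 ≤ g i t := fun i t => Int.fract_nonneg _
  have hg1 : ∀ i t, g i t < 1 := fun i t => Int.fract_lt_one _
  set F : ℝ → ∀ i, Ω i := fun t i => f i (g i t) with hFdef
  set A : (∀ i, Ω i) → Set ℝ := fun ω => Set.Ico 0 1 ∩ {t | F t = ω} with hAdef
  have hAeq : ∀ ω, A ω = Set.Ico 0 1 ∩
      ⋂ i, (g i) ⁻¹' Set.Ico (S i (ω i)) (S i (ω i) + μ i (ω i)) := by
    intro ω
    ext t
    simp only [hAdef, Set.mem_inter_iff, Set.mem_setOf_eq, Set.mem_iInter, Set.mem_preimage,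
      Set.mem_Ico, funext_iff]
    constructor
    · rintro ⟨ht, hFt⟩
      exact ⟨ht, fun i => (hf i (g i t) (hg0 i t) (hg1 i t) (ω i)).1 (hFt i)⟩
    · rintro ⟨ht, hmem⟩
      exact ⟨ht, fun i => (hf i (g i t) (hg0 i t) (hg1 i t) (ω i)).2 (hmem i)⟩
  have hAm : ∀ ω, MeasurableSet (A ω) := by
    intro ω
    rw [hAeq]
    exact measurableSet_Ico.inter (MeasurableSet.iInter fun i =>
      ((measurable_id.add_const (c i)).fract) measurableSet_Ico)
  have hAsub : ∀ ω, A ω ⊆ Set.Ico 0 1 := fun ω => Set.inter_subset_left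
  have hAfin : ∀ ω, MeasureTheory.volume (A ω) ≠ ⊤ := by
    intro ω
    refine ne_of_lt (lt_of_le_of_lt (MeasureTheory.measure_mono (hAsub ω)) ?_)
    rw [Real.volume_Ico]
    norm_num
  have hAdisj : ∀ ω ω', ω ≠ ω' → Disjoint (A ω) (A ω') := by
    intro ω ω' hωω'
    rw [Set.disjoint_left]
    rintro t ⟨-, ht⟩ ⟨-, ht'⟩
    exact hωω' (ht.symm.trans ht')
  have hsum : ∀ s : Finset (∀ i, Ω i),
      ∑ ω ∈ s, (MeasureTheory.volume (A ω)).toReal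
        = (MeasureTheory.volume (⋃ ω ∈ s, A ω)).toReal := by
    intro s
    rw [MeasureTheory.measure_biUnion_finset
      (fun ω _ ω' _ h => hAdisj ω ω' h) (fun ω _ => hAm ω)]
    exact (ENNReal.toReal_sum (fun ω _ => hAfin ω)).symm
  have hmemA : ∀ t : ℝ, t ∈ Set.Ico (0:ℝ) 1 → t ∈ A (F t) := by
    intro t ht
    exact ⟨ht, rfl⟩
  refine ⟨fun ω => (MeasureTheory.volume (A ω)).toReal,
    fun ω => ENNReal.toReal_nonneg, ?_, ?_, ?_⟩
  · -- total mass 1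
    rw [hsum univ]
    have : ⋃ ω ∈ (univ : Finset (∀ i, Ω i)), A ω = Set.Ico 0 1 := by
      apply Set.Subset.antisymm
      · exact Set.iUnion₂_subset fun ω _ => hAsub ω
      · intro t ht
        exact Set.mem_biUnion (mem_univ (F t)) (hmemA t ht)
    rw [this, Real.volume_Ico]
    norm_num
  · -- marginals
    intro i a
    rw [hsum]
    have hUeq : ⋃ ω ∈ univ.filter (fun ω : (i : Fin k) → Ω i => ω i = a), A ω
        = Set.Ico 0 1 ∩ (g i) ⁻¹' Set.Ico (S i a) (S i a + μ i a) := by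
      apply Set.Subset.antisymm
      · refine Set.iUnion₂_subset fun ω hω => ?_
        rw [mem_filter] at hω
        rw [hAeq]
        rintro t ⟨ht, hmem⟩
        rw [Set.mem_iInter] at hmem
        refine ⟨ht, ?_⟩
        have := hmem i
        rwa [hω.2] at this
      · rintro t ⟨ht, hpre⟩
        have hFt : F t i = a := (hf i (g i t) (hg0 i t) (hg1 i t) a).2 hpre
        exact Set.mem_iUnion₂.2
          ⟨F t, Finset.mem_filter.2 ⟨Finset.mem_univ _, hFt⟩, hmemA t ht⟩
    rw [hUeq, hgdef]
    simp only
    rw [vol_fract_interval (c i) (S i a) (S i a + μ i a) (hc0 i) (hc1 i)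
      (hS0 i a) (by linarith [hμ0 i a]) (hS1 i a)]
    rw [ENNReal.toReal_ofReal (by linarith [hμ0 i a])]
    ring
  · -- bad event
    apply Finset.sum_eq_zero
    intro ω hω
    rw [mem_filter] at hω
    obtain ⟨-, i, j, hij, hbi, hbj⟩ := hω
    have hAempty : A ω = ∅ := by
      rw [hAeq, Set.eq_empty_iff_forall_notMem]
      rintro t ⟨ht, hmem⟩
      rw [Set.mem_iInter] at hmem
      have hui := hmem i
      have huj := hmem j
      rw [Set.mem_preimage, Set.mem_Ico] at hui huj
      have hub : ∀ l : Fin k, ω l ∈ B l → g l t < 1 / k := by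
        intro l hl
        have h1 := (hmem l)
        rw [Set.mem_preimage, Set.mem_Ico] at h1
        calc g l t < S l (ω l) + μ l (ω l) := h1.2
          _ ≤ ∑ b ∈ B l, μ l b := hSB l (ω l) hl
          _ ≤ 1 / k := hB l
      have hui' : g i t < 1 / k := hub i hbi
      have huj' : g j t < 1 / k := hub j hbj
      -- integer argument
      set u := g i t with hudef
      set v := g j t with hvdef
      set mi : ℤ := ⌊t + c i⌋ with hmi
      set mj : ℤ := ⌊t + c j⌋ with hmj
      have hu : u = t + c i - mi := (Int.self_sub_floor (t + c i)).symm
      have hv : v = t + c j - mj := (Int.self_sub_floor (t + c j)).symm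
      set m : ℤ := mj - mi with hm
      set z : ℤ := ((i : ℕ) : ℤ) - ((j : ℕ) : ℤ) + m * (k : ℤ) with hzdef
      have hkey : ((z : ℤ) : ℝ) = (u - v) * k := by
        rw [hzdef]
        push_cast
        rw [hu, hv, hcdef]
        field_simp
        rw [Int.cast_sub]
        ring
      have habs : |((z : ℤ) : ℝ)| < 1 := by
        rw [hkey, abs_mul, abs_of_pos hkpos]
        have h1 : |u - v| < 1 / k :=
          abs_sub_lt_iff.2 ⟨by linarith [hg0 j t], by linarith [hg0 i t]⟩
        calc |u - v| * k < (1 / k) * k := mul_lt_mul_of_pos_right h1 hkpos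
          _ = 1 := by field_simp
      have hzabs : |z| < 1 := by
        rw [← Int.cast_abs] at habs
        exact_mod_cast habs
      have hz0 : z = 0 := Int.abs_lt_one_iff.1 hzabs
      have hb1 : ((j : ℕ) : ℤ) - ((i : ℕ) : ℤ) = m * (k : ℤ) := by
        rw [hzdef] at hz0; linarith
      have hik : ((i : ℕ) : ℤ) < k := by exact_mod_cast i.isLt
      have hjk : ((j : ℕ) : ℤ) < k := by exact_mod_cast j.isLt
      have hi0 : (0:ℤ) ≤ ((i : ℕ) : ℤ) := Int.natCast_nonneg _
      have hj0 : (0:ℤ) ≤ ((j : ℕ) : ℤ) := Int.natCast_nonneg _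
      have habs2 : |m * (k : ℤ)| < (k : ℤ) := by
        rw [← hb1]
        exact abs_lt.2 ⟨by linarith, by linarith⟩
      rw [abs_mul, abs_of_nonneg (by positivity : (0:ℤ) ≤ (k:ℤ))] at habs2
      have hmabs : |m| < 1 := by
        by_contra h
        push_neg at h
        nlinarith
      have hm0 : m = 0 := Int.abs_lt_one_iff.1 hmabs
      rw [hzdef, hm0, zero_mul, add_zero, sub_eq_zero] at hz0
      exact hij (Fin.ext (by exact_mod_cast hz0))
    rw [hAempty]
    simp
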